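/- Let p be a prime and M a finitely generated torsion module over Λ = Z_p[[T]]. If the coinvariants M/(T·M) form a finite group, then the invariants M[T] = {m ∈ M : T·m = 0} also form a finite group, and conversely. -/

import Mathlib

open PowerSeries

namespace HB
variable {R : Type*} [CommRing R]

/-- The ideal of `n`-th coefficients of elements of `I` of order at least `n`. -/
def lead (I : Ideal R⟦X⟧) (n : ℕ) : Ideal R where
  carrier := {c | ∃ f, f ∈ I ∧ (∀ i < n, coeff i f = 0) ∧ coeff n f = c}
  add_mem' := by
    rintro a b ⟨f, hf, h1, h2⟩ ⟨g, hg, k1, k2⟩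
    exact ⟨f + g, I.add_mem hf hg, fun i hi => by simp [h1 i hi, k1 i hi],
      by simp [h2, k2]⟩
  zero_mem' := ⟨0, I.zero_mem, by simp, by simp⟩
  smul_mem' := by
    rintro r a ⟨f, hf, h1, h2⟩
    exact ⟨C r * f, I.mul_mem_left _ hf,
      fun i hi => by simp [coeff_C_mul, h1 i hi], by simp [coeff_C_mul, h2]⟩

lemma mem_lead {I : Ideal R⟦X⟧} {n : ℕ} {c : R} :
    c ∈ lead I n ↔ ∃ f, f ∈ I ∧ (∀ i < n, coeff i f = 0) ∧ coeff n f = c :=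
  Iff.rfl

lemma lead_mono (I : Ideal R⟦X⟧) : Monotone (lead I) := by
  apply monotone_nat_of_le_succ
  rintro n c ⟨f, hf, h1, h2⟩
  refine ⟨X * f, I.mul_mem_left _ hf, ?_, by rw [coeff_succ_X_mul, h2]⟩
  intro i hi
  cases i with
  | zero => simp
  | succ j => rw [coeff_succ_X_mul]; exact h1 j (by omega)

theorem powerSeries_isNoetherianRing [IsNoetherianRing R] : IsNoetherianRing R⟦X⟧ := by
  classical
  rw [isNoetherianRing_iff_ideal_fg]
  intro I
  obtain ⟨N, hN⟩ := monotone_stabilizes_iff_noetherian.mpr ‹IsNoetherianRing R›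
    ⟨lead I, lead_mono I⟩
  have hN' : ∀ m, N ≤ m → lead I N = lead I m := hN
  have hfg : ∀ n, (lead I n).FG := fun n => IsNoetherian.noetherian _
  choose s hs using hfg
  have hwit : ∀ n (c : {x // x ∈ s n}), ∃ f, f ∈ I ∧ (∀ i < n, coeff i f = 0) ∧
      coeff n f = (c : R) := by
    intro n c
    exact mem_lead.mp ((hs n) ▸ Submodule.subset_span c.2)
  choose wit witI wit1 wit2 using hwit
  -- the candidate generating set
  set F : Finset R⟦X⟧ :=
    (Finset.range (N + 1)).biUnion (fun n => (s n).attach.image (wit n)) with hF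
  have hmemF : ∀ (n : ℕ), n ≤ N → ∀ (c : {x // x ∈ s n}), wit n c ∈ F := by
    intro n hn c
    rw [hF]
    exact Finset.mem_biUnion.mpr
      ⟨n, Finset.mem_range.mpr (by omega), Finset.mem_image_of_mem _ (Finset.mem_attach _ _)⟩
  set S : Ideal R⟦X⟧ := Ideal.span (↑F : Set R⟦X⟧) with hS
  have hSI : S ≤ I := by
    rw [hS, Ideal.span_le]
    intro f hf
    rw [hF] at hf
    obtain ⟨n, _, hf⟩ := Finset.mem_biUnion.mp hf
    obtain ⟨c, _, rfl⟩ := Finset.mem_image.mp hf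
    exact witI n c
  -- Lemma A : elements of order ≥ N lie in S
  have lemA : ∀ f, f ∈ I → (∀ i < N, coeff i f = 0) → f ∈ S := by
    intro f hfI hford
    have hsel : ∀ c : R, c ∈ (Ideal.span (↑(s N) : Set R) : Ideal R) →
        ∃ φ : R → R, ∑ i ∈ s N, φ i • i = c := fun c hc => by
          obtain ⟨φ, -, hφ⟩ := Submodule.mem_span_finset.mp hc; exact ⟨φ, hφ⟩
    set ψ : R → R → R := fun c =>
      if h : c ∈ (Ideal.span (↑(s N) : Set R) : Ideal R) then (hsel c h).choose else 0 with hψ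
    have hψ_spec : ∀ c, c ∈ (Ideal.span (↑(s N) : Set R) : Ideal R) →
        ∑ i ∈ s N, ψ c i • i = c := by
      intro c hc
      rw [hψ]; simp only [dif_pos hc]
      exact (hsel c hc).choose_spec
    -- the remainder sequence
    set rem : ℕ → R⟦X⟧ := fun m => Nat.rec f
      (fun m r => r - ∑ c ∈ (s N).attach,
        (C (ψ (coeff (N + m) r) (c : R)) * X ^ m) * wit N c) m with hrem
    have hrem0 : rem 0 = f := rfl
    have hremS : ∀ m, rem (m + 1) = rem m - ∑ c ∈ (s N).attach,
        (C (ψ (coeff (N + m) (rem m)) (c : R)) * X ^ m) * wit N c := fun m => rfl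
    have hspanN : ∀ m, Ideal.span (↑(s N) : Set R) = lead I (N + m) := by
      intro m
      rw [hs N]
      exact hN' (N + m) (by omega)
    -- invariant
    have hinv : ∀ m, rem m ∈ I ∧ ∀ j < N + m, coeff j (rem m) = 0 := by
      intro m
      induction m with
      | zero => exact ⟨hfI, fun j hj => hford j (by omega)⟩
      | succ m ih =>
        obtain ⟨ihI, ihc⟩ := ih
        have hcm : coeff (N + m) (rem m) ∈ (Ideal.span (↑(s N) : Set R) : Ideal R) := by
          rw [hspanN m]
          exact ⟨rem m, ihI, ihc, rfl⟩
        constructor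
        · rw [hremS m]
          exact I.sub_mem ihI (Ideal.sum_mem _ fun c _ => I.mul_mem_left _ (witI N c))
        · intro j hj
          rw [hremS m, map_sub, map_sum]
          have hterm : ∀ c ∈ (s N).attach,
              coeff j ((C (ψ (coeff (N + m) (rem m)) (c : R)) * X ^ m) * wit N c) =
              ψ (coeff (N + m) (rem m)) (c : R) *
                (if m ≤ j then coeff (j - m) (wit N c) else 0) := by
            intro c _
            rw [mul_assoc, coeff_C_mul, coeff_X_pow_mul']
          rcases lt_or_ge j (N + m) with hj' | hj'
          · rw [ihc j hj', Finset.sum_congr rfl hterm]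
            have hzero : ∀ c ∈ (s N).attach,
                ψ (coeff (N + m) (rem m)) (c : R) *
                  (if m ≤ j then coeff (j - m) (wit N c) else 0) = 0 := by
              intro c _
              by_cases hmj : m ≤ j
              · rw [if_pos hmj, wit1 N c (j - m) (by omega), mul_zero]
              · rw [if_neg hmj, mul_zero]
            rw [Finset.sum_congr rfl hzero, Finset.sum_const_zero, sub_self]
          · have hjeq : j = N + m := by omega
            subst hjeq
            rw [Finset.sum_congr rfl hterm]
            have hval : ∀ c ∈ (s N).attach,
                ψ (coeff (N + m) (rem m)) (c : R) *
                  (if m ≤ N + m then coeff (N + m - m) (wit N c) else 0) =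
                ψ (coeff (N + m) (rem m)) (c : R) * (c : R) := by
              intro c _
              rw [if_pos (by omega), show N + m - m = N by omega, wit2 N c]
            rw [Finset.sum_congr rfl hval,
              Finset.sum_attach (s N) (fun x => ψ (coeff (N + m) (rem m)) x * x)]
            have hsp := hψ_spec _ hcm
            simp only [smul_eq_mul] at hsp
            rw [hsp, sub_self]
    -- the power series coefficients
    set d : {x // x ∈ s N} → ℕ → R := fun c m => ψ (coeff (N + m) (rem m)) (c : R) with hd
    have hpartial : ∀ m, f - rem m = ∑ c ∈ (s N).attach,
        (∑ k ∈ Finset.range m, C (d c k) * X ^ k) * wit N c := by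
      intro m
      induction m with
      | zero => simp [hrem0]
      | succ m ih =>
        have hstep : f - rem (m + 1) = (f - rem m) + ∑ c ∈ (s N).attach,
            (C (d c m) * X ^ m) * wit N c := by
          rw [hremS m]; ring
        rw [hstep, ih, ← Finset.sum_add_distrib]
        refine Finset.sum_congr rfl fun c _ => ?_
        rw [Finset.sum_range_succ, add_mul]
    have key : f = ∑ c ∈ (s N).attach, PowerSeries.mk (d c) * wit N c := by
      ext j
      have hpercoeff : ∀ c ∈ (s N).attach,
          coeff j ((∑ k ∈ Finset.range (j + 1), C (d c k) * X ^ k) * wit N c) =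
          coeff j (PowerSeries.mk (d c) * wit N c) := by
        intro c _
        rw [coeff_mul, coeff_mul]
        refine Finset.sum_congr rfl fun uv huv => ?_
        have hu : uv.1 ≤ j := by
          have := Finset.HasAntidiagonal.mem_antidiagonal.mp huv
          omega
        congr 1
        rw [coeff_mk, map_sum]
        simp only [coeff_C_mul, coeff_X_pow, mul_ite, mul_one, mul_zero]
        rw [Finset.sum_ite_eq]
        simp [Finset.mem_range, Nat.lt_succ_iff, hu]
      calc coeff j f = coeff j (f - rem (j + 1)) := by
            rw [map_sub, (hinv (j + 1)).2 j (by omega), sub_zero]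
        _ = coeff j (∑ c ∈ (s N).attach,
              (∑ k ∈ Finset.range (j + 1), C (d c k) * X ^ k) * wit N c) := by
            rw [hpartial (j + 1)]
        _ = coeff j (∑ c ∈ (s N).attach, PowerSeries.mk (d c) * wit N c) := by
            rw [map_sum, map_sum]
            exact Finset.sum_congr rfl hpercoeff
    rw [key]
    exact Ideal.sum_mem _ fun c _ =>
      Ideal.mul_mem_left _ _ (Ideal.subset_span (hmemF N le_rfl c))
  -- Lemma B : downward induction below N
  have lemB : ∀ j, ∀ f, f ∈ I → (∀ i < N - j, coeff i f = 0) → f ∈ S := by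
    intro j
    induction j with
    | zero =>
      intro f hf h
      exact lemA f hf (by simpa using h)
    | succ j ih =>
      intro f hf h
      have hc : coeff (N - (j + 1)) f ∈ lead I (N - (j + 1)) :=
        ⟨f, hf, fun i hi => h i hi, rfl⟩
      rw [← hs (N - (j + 1))] at hc
      obtain ⟨φ, -, hφ⟩ := Submodule.mem_span_finset.mp hc
      set f' := f - ∑ c ∈ (s (N - (j + 1))).attach, C (φ (c : R)) * wit (N - (j + 1)) c
        with hf'
      have hf'I : f' ∈ I := I.sub_mem hf
        (Ideal.sum_mem _ fun c _ => I.mul_mem_left _ (witI _ c))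
      have hf'c : ∀ i < N - j, coeff i f' = 0 := by
        intro i hi
        rw [hf', map_sub, map_sum]
        have hterm : ∀ c ∈ (s (N - (j + 1))).attach,
            coeff i (C (φ (c : R)) * wit (N - (j + 1)) c) =
            φ (c : R) * coeff i (wit (N - (j + 1)) c) := fun c _ => coeff_C_mul _ _ _
        rcases lt_or_ge i (N - (j + 1)) with hid | hid
        · rw [h i hid, Finset.sum_congr rfl hterm]
          have hzero : ∀ c ∈ (s (N - (j + 1))).attach,
              φ (c : R) * coeff i (wit (N - (j + 1)) c) = 0 := by
            intro c _
            rw [wit1 _ c i hid, mul_zero]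
          rw [Finset.sum_congr rfl hzero, Finset.sum_const_zero, sub_self]
        · have hieq : i = N - (j + 1) := by omega
          subst hieq
          rw [Finset.sum_congr rfl hterm]
          have hval : ∀ c ∈ (s (N - (j + 1))).attach,
              φ (c : R) * coeff (N - (j + 1)) (wit (N - (j + 1)) c) = φ (c : R) * (c : R) := by
            intro c _
            rw [wit2]
          rw [Finset.sum_congr rfl hval,
            Finset.sum_attach (s (N - (j + 1))) (fun x => φ x * x)]
          simp only [smul_eq_mul] at hφ
          rw [hφ, sub_self]
      have hf'S : f' ∈ S := ih f' hf'I hf'c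
      have hexp : f = f' + ∑ c ∈ (s (N - (j + 1))).attach,
          C (φ (c : R)) * wit (N - (j + 1)) c := by
        rw [hf']; ring
      rw [hexp]
      exact S.add_mem hf'S (Ideal.sum_mem _ fun c _ =>
        Ideal.mul_mem_left _ _ (Ideal.subset_span (hmemF _ (by omega) c)))
  exact ⟨F, le_antisymm hSI fun f hf => lemB N f hf fun i hi => absurd hi (by omega)⟩

end HB

open PowerSeries

section ExtLemmas

variable {R : Type*} [CommRing R]

lemma finite_of_submodule_quotient {A : Type*} [AddCommGroup A] [Module R A]
    (S : Submodule R A) (h1 : Finite S) (h2 : Finite (A ⧸ S)) : Finite A := by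
  have hmem : ∀ a : A, a - Quotient.out (Submodule.Quotient.mk a : A ⧸ S) ∈ S := by
    intro a
    have h : Submodule.Quotient.mk (Quotient.out (Submodule.Quotient.mk a : A ⧸ S)) =
        (Submodule.Quotient.mk a : A ⧸ S) := Quotient.out_eq _
    exact (Submodule.Quotient.eq S).mp h.symm
  have hinj : Function.Injective (fun a : A =>
      ((Submodule.Quotient.mk a : A ⧸ S),
        (⟨a - Quotient.out (Submodule.Quotient.mk a : A ⧸ S), hmem a⟩ : S))) := by
    intro a b hab
    simp only [Prod.mk.injEq, Subtype.mk.injEq] at hab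
    obtain ⟨h1', h2'⟩ := hab
    rw [h1'] at h2'
    exact sub_left_injective h2'
  exact Finite.of_injective _ hinj

lemma subsingleton_of_one_eq_zero {A : Type*} [AddCommGroup A] [Module R A]
    (h : (1 : A →ₗ[R] A) = 0) : Subsingleton A := by
  constructor
  intro a b
  have ha : a = (1 : A →ₗ[R] A) a := rfl
  have hb : b = (1 : A →ₗ[R] A) b := rfl
  rw [ha, hb, h]
  simp

/-- If `ψ` is a nilpotent endomorphism with finite kernel, the module is finite. -/
lemma finite_of_nilpotent_ker_finite :
    ∀ (n : ℕ) (A : Type w) [AddCommGroup A] [Module R A] (ψ : A →ₗ[R] A),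
      ψ ^ n = 0 → Finite (LinearMap.ker ψ) → Finite A := by
  intro n
  induction n with
  | zero =>
    intro A _ _ ψ h0 _
    rw [pow_zero] at h0
    have := subsingleton_of_one_eq_zero h0
    exact Finite.of_subsingleton
  | succ n ih =>
    intro A _ _ ψ h0 hker
    have hmapr : ∀ x ∈ LinearMap.range ψ, ψ x ∈ LinearMap.range ψ := fun x _ =>
      LinearMap.mem_range_self ψ x
    set ψ' := ψ.restrict hmapr with hψ'
    have h0' : ψ' ^ n = 0 := by
      rw [hψ', Module.End.pow_restrict n hmapr]
      ext ⟨x, y, rfl⟩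
      have : (ψ ^ n) (ψ y) = (ψ ^ (n + 1)) y := by
        rw [pow_succ, Module.End.mul_apply]
      simp only [LinearMap.restrict_apply, LinearMap.zero_apply, ZeroMemClass.coe_zero]
      rw [this, h0]
      simp
    have hker' : Finite (LinearMap.ker ψ') := by
      haveI := hker
      have hmem : ∀ x : LinearMap.ker ψ', (x.1.1 : A) ∈ LinearMap.ker ψ := by
        intro x
        have hx := x.2
        rw [LinearMap.mem_ker] at hx ⊢
        have h2 : (ψ' x.1 : A) = ψ x.1.1 := LinearMap.restrict_coe_apply _ _ _
        rw [hx] at h2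
        exact h2.symm
      exact Finite.of_injective (α := LinearMap.ker ψ') (β := LinearMap.ker ψ)
        (fun x => ⟨x.1.1, hmem x⟩)
        (fun x y hxy => Subtype.ext (Subtype.ext (by simpa using congrArg Subtype.val hxy)))
    have hA' : Finite (LinearMap.range ψ) := ih _ ψ' h0' hker'
    haveI := hA'
    have hq : Finite (A ⧸ LinearMap.ker ψ) :=
      Finite.of_equiv _ (ψ.quotKerEquivRange).symm.toEquiv
    exact finite_of_submodule_quotient (LinearMap.ker ψ) hker hq

/-- If `ψ` is a nilpotent endomorphism with finite cokernel, the module is finite. -/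
lemma finite_of_nilpotent_coker_finite :
    ∀ (n : ℕ) (A : Type w) [AddCommGroup A] [Module R A] (ψ : A →ₗ[R] A),
      ψ ^ n = 0 → Finite (A ⧸ LinearMap.range ψ) → Finite A := by
  intro n
  induction n with
  | zero =>
    intro A _ _ ψ h0 _
    rw [pow_zero] at h0
    have := subsingleton_of_one_eq_zero h0
    exact Finite.of_subsingleton
  | succ n ih =>
    intro A _ _ ψ h0 hcoker
    have hmapr : ∀ x ∈ LinearMap.range ψ, ψ x ∈ LinearMap.range ψ := fun x _ =>
      LinearMap.mem_range_self ψ x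
    set ψ' := ψ.restrict hmapr with hψ'
    have h0' : ψ' ^ n = 0 := by
      rw [hψ', Module.End.pow_restrict n hmapr]
      ext ⟨x, y, rfl⟩
      have : (ψ ^ n) (ψ y) = (ψ ^ (n + 1)) y := by
        rw [pow_succ, Module.End.mul_apply]
      simp only [LinearMap.restrict_apply, LinearMap.zero_apply, ZeroMemClass.coe_zero]
      rw [this, h0]
      simp
    -- the cokernel of ψ' is a quotient of the cokernel of ψ
    have hcoker' : Finite ((LinearMap.range ψ) ⧸ LinearMap.range ψ') := by
      set β : A →ₗ[R] (LinearMap.range ψ) ⧸ LinearMap.range ψ' :=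
        (Submodule.mkQ (LinearMap.range ψ')).comp ψ.rangeRestrict with hβ
      have hβsurj : Function.Surjective β := by
        intro z
        obtain ⟨y, hy⟩ := Submodule.Quotient.mk_surjective _ z
        obtain ⟨a, ha⟩ := ψ.surjective_rangeRestrict y
        exact ⟨a, by rw [hβ, LinearMap.comp_apply, ha, Submodule.mkQ_apply, hy]⟩
      have hβ0 : LinearMap.range ψ ≤ LinearMap.ker β := by
        rintro x ⟨y, rfl⟩
        rw [LinearMap.mem_ker, hβ, LinearMap.comp_apply, Submodule.mkQ_apply,
          Submodule.Quotient.mk_eq_zero]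
        exact ⟨⟨ψ y, LinearMap.mem_range_self ψ y⟩, by
          apply Subtype.ext
          have : (ψ' ⟨ψ y, LinearMap.mem_range_self ψ y⟩ : A) = ψ (ψ y) :=
            LinearMap.restrict_coe_apply _ _ _
          rw [this]
          rfl⟩
      have hsurj2 : Function.Surjective
          ((LinearMap.range ψ).liftQ β hβ0) := by
        intro z
        obtain ⟨a, ha⟩ := hβsurj z
        exact ⟨Submodule.Quotient.mk a, by rwa [Submodule.liftQ_apply]⟩
      haveI := hcoker
      exact Finite.of_surjective _ hsurj2
    have hA' : Finite (LinearMap.range ψ) := ih _ ψ' h0' hcoker'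
    exact finite_of_submodule_quotient (LinearMap.range ψ) hA' hcoker

end ExtLemmas

section Crux

variable {p : ℕ} [Fact p.Prime]

local notation "Λ" => PowerSeries ℤ_[p]

/-- If `X` acts injectively on a finitely generated torsion `Λ`-module `A`,
then `A/XA` is finite. -/
lemma crux_coinvariants {A : Type*} [AddCommGroup A] [Module Λ A]
    [Module.Finite Λ A] (htor : Module.IsTorsion Λ A)
    (hinj : ∀ a : A, (X : Λ) • a = 0 → a = 0) :
    Finite (A ⧸ LinearMap.range (LinearMap.lsmul Λ A X)) := by
  classical
  -- every element is annihilated by a power series with nonzero constant term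
  have haux : ∀ (n : ℕ) (f : Λ) (a : A), coeff n f ≠ 0 → f • a = 0 →
      ∃ g : Λ, constantCoeff g ≠ 0 ∧ g • a = 0 := by
    intro n
    induction n using Nat.strong_induction_on with
    | _ n ih =>
      intro f a hn hfa
      by_cases h0 : constantCoeff f = 0
      · obtain ⟨g, rfl⟩ := X_dvd_iff.mpr h0
        have hga : g • a = 0 := hinj _ (by rw [← mul_smul]; exact hfa)
        cases n with
        | zero =>
          exact absurd (by simpa [coeff_zero_eq_constantCoeff] using h0) hn
        | succ k =>
          rw [coeff_succ_X_mul] at hn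
          exact ih k (by omega) g a hn hga
      · exact ⟨f, h0, hfa⟩
  have hann : ∀ a : A, ∃ g : Λ, constantCoeff g ≠ 0 ∧ g • a = 0 := by
    intro a
    obtain ⟨⟨f, hf⟩, hfa⟩ := @htor a
    have hf0 : f ≠ 0 := nonZeroDivisors.ne_zero hf
    have : ∃ n, coeff n f ≠ 0 := by
      by_contra hco
      push_neg at hco
      exact hf0 (PowerSeries.ext fun n => by rw [hco n, map_zero])
    obtain ⟨n, hn⟩ := this
    exact haux n f a hn hfa
  -- a global annihilator with nonzero constant term
  obtain ⟨t, ht⟩ := Module.Finite.fg_top (R := Λ) (M := A)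
  choose g hg0 hga using hann
  set G : Λ := ∏ x ∈ t, g x with hGdef
  have hG0 : constantCoeff G ≠ 0 := by
    rw [hGdef, map_prod]
    exact Finset.prod_ne_zero_iff.mpr fun x _ => hg0 x
  have hGall : ∀ a : A, G • a = 0 := by
    intro a
    have ha : a ∈ Submodule.span Λ (t : Set A) := ht ▸ Submodule.mem_top
    induction ha using Submodule.span_induction with
    | mem x hx =>
      rw [hGdef, ← Finset.mul_prod_erase t g hx, mul_comm, mul_smul, hga x, smul_zero]
    | zero => simp
    | add x y hx hy ihx ihy => rw [smul_add, ihx, ihy, add_zero]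
    | smul r x hx ihx => rw [smul_comm, ihx, smul_zero]
  -- the quotient
  set Q := A ⧸ LinearMap.range (LinearMap.lsmul Λ A X) with hQ
  have hXQ : ∀ q : Q, (X : Λ) • q = 0 := by
    intro q
    obtain ⟨m, rfl⟩ := Submodule.Quotient.mk_surjective _ q
    rw [← Submodule.Quotient.mk_smul, Submodule.Quotient.mk_eq_zero]
    exact ⟨m, rfl⟩
  have hGQ : ∀ q : Q, G • q = 0 := by
    intro q
    obtain ⟨m, rfl⟩ := Submodule.Quotient.mk_surjective _ q
    rw [← Submodule.Quotient.mk_smul, hGall m, Submodule.Quotient.mk_zero]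
  -- constant coefficient reduction
  have hCQ : ∀ (h : Λ) (q : Q), h • q = (C (constantCoeff h)) • q := by
    intro h q
    have hdvd : (X : Λ) ∣ (h - C (constantCoeff h)) :=
      X_dvd_iff.mpr (by simp)
    obtain ⟨w, hw⟩ := hdvd
    have h1 : (h - C (constantCoeff h)) • q = 0 := by
      rw [hw, mul_smul]; exact hXQ _
    rw [sub_smul] at h1
    exact sub_eq_zero.mp h1
  -- the p-power annihilation
  set c := constantCoeff G with hc
  set k := (PadicInt.valuation c) with hk
  haveI : NeZero (p ^ k) := ⟨pow_ne_zero _ (Nat.Prime.ne_zero Fact.out)⟩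
  have hpQ : ∀ q : Q, ((p : Λ) ^ k) • q = 0 := by
    intro q
    have h1 : (C c) • q = 0 := by rw [hc, ← hCQ G q]; exact hGQ q
    have hspec : c = ((PadicInt.unitCoeff hG0 : ℤ_[p])) * (p : ℤ_[p]) ^ k :=
      PadicInt.unitCoeff_spec hG0
    have h2 : (C ((PadicInt.unitCoeff hG0 : ℤ_[p]))) • (((p : Λ) ^ k) • q) = 0 := by
      rw [smul_smul, show ((p:Λ)) = C ((p:ℤ_[p])) from (map_natCast _ p).symm,
        ← map_pow, ← map_mul, ← hspec]
      exact h1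
    have h3 : (C (((PadicInt.unitCoeff hG0)⁻¹ : ℤ_[p]ˣ) : ℤ_[p])) •
        ((C ((PadicInt.unitCoeff hG0 : ℤ_[p]))) • (((p : Λ) ^ k) • q)) =
        (C (((PadicInt.unitCoeff hG0)⁻¹ : ℤ_[p]ˣ) : ℤ_[p])) • (0 : Q) := by
      rw [h2]
    rw [smul_zero, smul_smul, ← map_mul, Units.inv_mul, map_one, one_smul] at h3
    exact h3
  -- coefficient reduction to ZMod (p^k)
  have hred : ∀ (h : Λ) (q : Q),
      h • q = (((PadicInt.toZModPow k (constantCoeff h)).val : ℕ)) • q := by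
    intro h q
    set a := constantCoeff h with hadef
    set z := (PadicInt.toZModPow k a).val with hz
    have hker : a - ((z : ℕ) : ℤ_[p]) ∈ RingHom.ker (PadicInt.toZModPow k) := by
      rw [RingHom.mem_ker, map_sub, map_natCast, hz, ZMod.natCast_zmod_val, sub_self]
    rw [PadicInt.ker_toZModPow] at hker
    obtain ⟨d, hd⟩ := Ideal.mem_span_singleton'.mp hker
    -- hd : d * p ^ k = a - z
    have ha : a = ((z : ℕ) : ℤ_[p]) + (p : ℤ_[p]) ^ k * d := by
      linear_combination -hd
    rw [hCQ h q, ← hadef, ha, map_add, add_smul, map_mul, map_pow, map_natCast, map_natCast]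
    have hz2 : (((p : Λ)) ^ k * C d) • q = 0 := by
      rw [mul_smul]
      exact hpQ _
    rw [hz2, add_zero, Nat.cast_smul_eq_nsmul]
  -- conclude finiteness
  obtain ⟨tq, htq⟩ := Module.Finite.fg_top (R := Λ) (M := Q)
  have hsurj : Function.Surjective (fun v : {x // x ∈ tq} → ZMod (p ^ k) =>
      ∑ i ∈ tq.attach, ((v i).val : ℕ) • (i : Q)) := by
    intro q
    have hq' : q ∈ Submodule.span Λ (tq : Set Q) := htq ▸ Submodule.mem_top
    obtain ⟨φ, -, hφ⟩ := Submodule.mem_span_finset.mp hq'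
    refine ⟨fun i => PadicInt.toZModPow k (constantCoeff (φ i.1)), ?_⟩
    calc ∑ i ∈ tq.attach,
          (((PadicInt.toZModPow k (constantCoeff (φ i.1))).val : ℕ)) • (i : Q)
        = ∑ i ∈ tq.attach, φ i.1 • (i.1 : Q) :=
          Finset.sum_congr rfl fun i _ => (hred (φ i.1) i.1).symm
      _ = ∑ i ∈ tq, φ i • i := Finset.sum_attach tq (fun x => φ x • x)
      _ = q := hφ
  exact Finite.of_surjective _ hsurj

end Crux

section Main

variable (p : ℕ) [Fact p.Prime]

local notation "Λ" => PowerSeries ℤ_[p]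

theorem stmt_10' (M : Type*) [AddCommGroup M]
    [Module (PowerSeries ℤ_[p]) M] [Module.Finite (PowerSeries ℤ_[p]) M]
    (htor : Module.IsTorsion (PowerSeries ℤ_[p]) M) :
    Finite (M ⧸ LinearMap.range
        ((LinearMap.lsmul (PowerSeries ℤ_[p]) M) (PowerSeries.X))) ↔
      Finite (LinearMap.ker
        ((LinearMap.lsmul (PowerSeries ℤ_[p]) M) (PowerSeries.X))) := by
  haveI : IsNoetherianRing Λ := HB.powerSeries_isNoetherianRing
  set φ : M →ₗ[Λ] M := LinearMap.lsmul Λ M X with hφdef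
  obtain ⟨N, hNstab⟩ := Filter.eventually_atTop.mp (LinearMap.eventually_iSup_ker_pow_eq φ)
  set K : Submodule Λ M := LinearMap.ker (φ ^ N) with hKdef
  have hKsup : (⨆ m, LinearMap.ker (φ ^ m)) = K := hNstab N le_rfl
  have hker_le : LinearMap.ker φ ≤ K := by
    rw [← hKsup]
    exact le_iSup_of_le 1 (by rw [pow_one])
  have hstep : ∀ m : M, φ m ∈ K → m ∈ K := by
    intro m hm
    have h1 : m ∈ LinearMap.ker (φ ^ (N + 1)) := by
      rw [LinearMap.mem_ker, pow_succ, Module.End.mul_apply]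
      exact hm
    rw [← hNstab (N + 1) (by omega), hKsup] at h1
    exact h1
  have hKmap : ∀ x ∈ K, φ x ∈ K := by
    intro x hx
    rw [hKdef, LinearMap.mem_ker] at hx ⊢
    have h2 : (φ ^ N) (φ x) = φ ((φ ^ N) x) := by
      rw [← Module.End.mul_apply, ← Module.End.mul_apply, ← pow_succ, ← pow_succ']
    rw [h2, hx, map_zero]
  set ψ : K →ₗ[Λ] K := φ.restrict hKmap with hψdef
  have hψpow : ψ ^ N = 0 := by
    rw [hψdef, Module.End.pow_restrict N hKmap]
    ext x
    have hx : (φ ^ N) x.1 = 0 := x.2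
    simp only [LinearMap.restrict_apply, LinearMap.zero_apply, ZeroMemClass.coe_zero]
    exact hx
  -- the quotient module
  set Mb := M ⧸ K with hMbdef
  have hinj : ∀ a : Mb, (X : Λ) • a = 0 → a = 0 := by
    intro a ha
    obtain ⟨m, rfl⟩ := Submodule.Quotient.mk_surjective K a
    rw [← Submodule.Quotient.mk_smul, Submodule.Quotient.mk_eq_zero] at ha
    exact (Submodule.Quotient.mk_eq_zero K).mpr (hstep m ha)
  have htorb : Module.IsTorsion Λ Mb := by
    intro a
    obtain ⟨m, rfl⟩ := Submodule.Quotient.mk_surjective K a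
    obtain ⟨f, hf⟩ := @htor m
    refine ⟨f, ?_⟩
    have : (f : Λ) • Submodule.Quotient.mk (p := K) m =
        Submodule.Quotient.mk (p := K) ((f : Λ) • m) := (Submodule.Quotient.mk_smul K _ _).symm
    rw [Submonoid.smul_def, this, show (f : Λ) • m = 0 from hf, Submodule.Quotient.mk_zero]
  have hcrux : Finite (Mb ⧸ LinearMap.range (LinearMap.lsmul Λ Mb X)) :=
    crux_coinvariants htorb hinj
  constructor
  · -- coinvariants finite → invariants finite
    intro hco
    set θ : K →ₗ[Λ] M ⧸ LinearMap.range φ :=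
      (Submodule.mkQ (LinearMap.range φ)).comp K.subtype with hθdef
    have hkerθ : LinearMap.ker θ = LinearMap.range ψ := by
      ext x
      rw [LinearMap.mem_ker, hθdef, LinearMap.comp_apply, Submodule.mkQ_apply,
        Submodule.Quotient.mk_eq_zero]
      constructor
      · rintro ⟨m, hm⟩
        have hmK : m ∈ K := by
          apply hstep
          rw [hφdef] at hm ⊢
          rw [hm]
          exact x.2
        refine ⟨⟨m, hmK⟩, ?_⟩
        apply Subtype.ext
        rw [show (ψ ⟨m, hmK⟩ : M) = φ m from LinearMap.restrict_coe_apply _ _ _, hm]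
        rfl
      · rintro ⟨y, rfl⟩
        exact ⟨y.1, (LinearMap.restrict_coe_apply φ hKmap y).symm⟩
    have h1 : Finite (K ⧸ LinearMap.range ψ) := by
      rw [← hkerθ]
      haveI := hco
      exact Finite.of_equiv _ (θ.quotKerEquivRange).symm.toEquiv
    have hKfin : Finite K := finite_of_nilpotent_coker_finite N K ψ hψpow h1
    haveI := hKfin
    exact Finite.of_injective
      (fun x : LinearMap.ker φ => (⟨x.1, hker_le x.2⟩ : K))
      (fun x y hxy => Subtype.ext (by simpa using congrArg Subtype.val hxy))
  · -- invariants finite → coinvariants finite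
    intro hinv
    have hkerψ : Finite (LinearMap.ker ψ) := by
      haveI := hinv
      have hmem : ∀ x : LinearMap.ker ψ, (x.1.1 : M) ∈ LinearMap.ker φ := by
        intro x
        have hx := x.2
        rw [LinearMap.mem_ker] at hx ⊢
        have h2 : (ψ x.1 : M) = φ x.1.1 := LinearMap.restrict_coe_apply _ _ _
        rw [hx] at h2
        exact h2.symm
      exact Finite.of_injective
        (fun x : LinearMap.ker ψ => (⟨x.1.1, hmem x⟩ : LinearMap.ker φ))
        (fun x y hxy => Subtype.ext (Subtype.ext (by simpa using congrArg Subtype.val hxy)))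
    have hKfin : Finite K := finite_of_nilpotent_ker_finite N K ψ hψpow hkerψ
    -- the projection to the coinvariants of Mb
    set ρ : M →ₗ[Λ] Mb ⧸ LinearMap.range (LinearMap.lsmul Λ Mb X) :=
      (Submodule.mkQ _).comp (Submodule.mkQ K) with hρdef
    have hρ0 : LinearMap.range φ ≤ LinearMap.ker ρ := by
      rintro x ⟨y, rfl⟩
      rw [LinearMap.mem_ker, hρdef, LinearMap.comp_apply, Submodule.mkQ_apply,
        Submodule.mkQ_apply, Submodule.Quotient.mk_eq_zero]
      refine ⟨Submodule.Quotient.mk y, ?_⟩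
      rw [LinearMap.lsmul_apply, ← Submodule.Quotient.mk_smul]
      rfl
    set π := (LinearMap.range φ).liftQ ρ hρ0 with hπdef
    have hπmk : ∀ m : M, π (Submodule.Quotient.mk m) = ρ m := fun m =>
      Submodule.liftQ_apply _ ρ m
    have hkerπ : Finite (LinearMap.ker π) := by
      haveI := hKfin
      have hmemk : ∀ x : K,
          (Submodule.Quotient.mk x.1 : M ⧸ LinearMap.range φ) ∈ LinearMap.ker π := by
        intro x
        rw [LinearMap.mem_ker, hπmk, hρdef, LinearMap.comp_apply, Submodule.mkQ_apply,
          Submodule.mkQ_apply, (Submodule.Quotient.mk_eq_zero K).mpr x.2,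
          Submodule.Quotient.mk_zero]
      have hsurj : Function.Surjective (fun x : K =>
          (⟨Submodule.Quotient.mk x.1, hmemk x⟩ : LinearMap.ker π)) := by
        rintro ⟨q, hq⟩
        obtain ⟨m, rfl⟩ := Submodule.Quotient.mk_surjective _ q
        rw [LinearMap.mem_ker, hπmk, hρdef, LinearMap.comp_apply, Submodule.mkQ_apply,
          Submodule.mkQ_apply, Submodule.Quotient.mk_eq_zero] at hq
        obtain ⟨b, hb⟩ := hq
        obtain ⟨y, rfl⟩ := Submodule.Quotient.mk_surjective K b
        rw [LinearMap.lsmul_apply, ← Submodule.Quotient.mk_smul] at hb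
        have hK2 : (X : Λ) • y - m ∈ K := (Submodule.Quotient.eq K).mp hb
        have hK3 : m - (X : Λ) • y ∈ K := by
          rw [← neg_sub]
          exact K.neg_mem hK2
        refine ⟨⟨m - (X : Λ) • y, hK3⟩, ?_⟩
        apply Subtype.ext
        show (Submodule.Quotient.mk (m - (X : Λ) • y) : M ⧸ LinearMap.range φ) =
          Submodule.Quotient.mk m
        rw [Submodule.Quotient.eq, sub_sub_cancel_left]
        refine Submodule.neg_mem _ ⟨y, ?_⟩
        rw [hφdef, LinearMap.lsmul_apply]
      exact Finite.of_surjective _ hsurj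
    have hq : Finite ((M ⧸ LinearMap.range φ) ⧸ LinearMap.ker π) := by
      haveI := hcrux
      exact Finite.of_equiv _ (π.quotKerEquivRange).symm.toEquiv
    exact finite_of_submodule_quotient (LinearMap.ker π) hkerπ hq

end Main

/-- For a finitely generated torsion module `M` over the Iwasawa algebra
`Λ = ℤ_[p]⟦T⟧`, the coinvariants `M/TM` are finite if and only if the invariants
`M[T]` are finite. -/
theorem stmt_10 (p : ℕ) [Fact p.Prime] (M : Type*) [AddCommGroup M]
    [Module (PowerSeries ℤ_[p]) M] [Module.Finite (PowerSeries ℤ_[p]) M]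
    (htor : Module.IsTorsion (PowerSeries ℤ_[p]) M) :
    Finite (M ⧸ LinearMap.range
        ((LinearMap.lsmul (PowerSeries ℤ_[p]) M) (PowerSeries.X))) ↔
      Finite (LinearMap.ker
        ((LinearMap.lsmul (PowerSeries ℤ_[p]) M) (PowerSeries.X))) :=
  stmt_10' p M htor
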